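/- arXiv:1707.05440 — 2 statements merged into one kernel-verified Lean document; each statement's English description precedes it below -/
import Mathlib

section
/- Let S be a finite set of points in the plane in general position and let p, q be two distinct points of S. Let T be the geometric graph on S whose edges are: the segment pq, the segment from p to every point of S lying strictly to the left of the directed line from p to q, and the segment from q to every point of S lying strictly to the right of that line. Then T is a plane spanning tree of S. -/
/-- Points in the plane. -/
abbrev Pt : Type := ℝ × ℝ

/-- A finite point set is in general position if no three of its points are collinear. -/
def GenPos (S : Finset Pt) : Prop :=
  ∀ p ∈ S, ∀ q ∈ S, ∀ r ∈ S, p ≠ q → p ≠ r → q ≠ r →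
    ¬ Collinear ℝ ({p, q, r} : Set Pt)

/-- A geometric graph on `S` (a simple graph on the points of `S`, edges drawn as
straight segments) is plane if the open segments of any two distinct edges are disjoint. -/
def IsPlaneGraph {S : Finset Pt} (G : SimpleGraph {x // x ∈ S}) : Prop :=
  ∀ a b c d : {x // x ∈ S}, G.Adj a b → G.Adj c d → s(a, b) ≠ s(c, d) →
    openSegment ℝ (a : Pt) (b : Pt) ∩ openSegment ℝ (c : Pt) (d : Pt) = ∅

/-- A plane spanning tree of `S`: a tree on all points of `S` drawn without crossings. -/
def IsPlaneSpanningTree {S : Finset Pt} (G : SimpleGraph {x // x ∈ S}) : Prop :=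
  G.IsTree ∧ IsPlaneGraph G

/-- A plane spanning path of `S`: a plane spanning tree in which every vertex
has degree at most two (i.e. a plane Hamiltonian path). -/
def IsPlaneSpanningPath {S : Finset Pt} (G : SimpleGraph {x // x ∈ S}) : Prop :=
  IsPlaneSpanningTree G ∧
    ∀ v a b c : {x // x ∈ S}, G.Adj v a → G.Adj v b → G.Adj v c →
      (a = b ∨ a = c ∨ b = c)

/-- The open segment spanned by an unordered pair of points. -/
def segOpen (e : Sym2 Pt) : Set Pt :=
  Sym2.lift ⟨fun a b => openSegment ℝ a b, fun a b => openSegment_symm ℝ a b⟩ e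

/-- `F` is a crossing family in `S`: a set of nondegenerate segments with endpoints
in `S`, any two of which cross (their open segments intersect). -/
def IsCrossingFamily (S : Finset Pt) (F : Finset (Sym2 Pt)) : Prop :=
  (∀ e ∈ F, ¬ e.IsDiag ∧ ∀ x ∈ e, x ∈ S) ∧
  (∀ e ∈ F, ∀ f ∈ F, e ≠ f → (segOpen e ∩ segOpen f).Nonempty)

/-- `x` lies strictly to the left of the directed line from `p` to `q`. -/
def leftOf (p q x : Pt) : Prop :=
  0 < (q.1 - p.1) * (x.2 - p.2) - (q.2 - p.2) * (x.1 - p.1)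

/-- `x` lies strictly to the right of the directed line from `p` to `q`. -/
def rightOf (p q x : Pt) : Prop :=
  (q.1 - p.1) * (x.2 - p.2) - (q.2 - p.2) * (x.1 - p.1) < 0

/-- The double star on `S` associated with the directed edge `pq`: the edge `pq`,
the edges from `p` to all points strictly left of the directed line `pq`, and the
edges from `q` to all points strictly right of it. -/
def doubleStar (S : Finset Pt) (p q : Pt) : SimpleGraph {x // x ∈ S} :=
  SimpleGraph.fromRel fun a b =>
    ((a : Pt) = p ∧ (b : Pt) = q) ∨
    ((a : Pt) = p ∧ leftOf p q (b : Pt)) ∨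
    ((a : Pt) = q ∧ rightOf p q (b : Pt))

/-- The regular wheel configuration `W_{2n}`: `2n-1` points regularly spaced on the
unit circle together with its center. -/
noncomputable def wheel (n : ℕ) : Finset Pt :=
  insert ((0 : ℝ), (0 : ℝ)) <| (Finset.range (2 * n - 1)).image fun j : ℕ =>
    (Real.cos (2 * Real.pi * (j : ℝ) / ((2 * n - 1 : ℕ) : ℝ)),
     Real.sin (2 * Real.pi * (j : ℝ) / ((2 * n - 1 : ℕ) : ℝ)))

/-- cross product orientation test -/
def cr (p q x : Pt) : ℝ := (q.1 - p.1) * (x.2 - p.2) - (q.2 - p.2) * (x.1 - p.1)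

lemma cr_self_left (p q : Pt) : cr p q p = 0 := by simp [cr]

lemma cr_self_right (p q : Pt) : cr p q q = 0 := by simp [cr]; ring

lemma cr_combo (p q x y : Pt) (a b : ℝ) (hab : a + b = 1) :
    cr p q (a • x + b • y) = a * cr p q x + b * cr p q y := by
  have hb : b = 1 - a := by linarith
  subst hb
  simp only [cr, Prod.fst_add, Prod.snd_add, Prod.smul_fst, Prod.smul_snd, smul_eq_mul]
  ring

lemma cr_pos_of_mem (p q u : Pt) (h : 0 < cr p q u) {z : Pt}
    (hz : z ∈ openSegment ℝ p u) : 0 < cr p q z := by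
  simp only [openSegment, Set.mem_setOf_eq] at hz
  obtain ⟨a, b, ha, hb, hab, rfl⟩ := hz
  rw [cr_combo p q p u a b hab, cr_self_left]
  nlinarith

lemma cr_neg_of_mem (p q v : Pt) (h : cr p q v < 0) {z : Pt}
    (hz : z ∈ openSegment ℝ q v) : cr p q z < 0 := by
  simp only [openSegment, Set.mem_setOf_eq] at hz
  obtain ⟨a, b, ha, hb, hab, rfl⟩ := hz
  rw [cr_combo p q q v a b hab, cr_self_right]
  nlinarith

lemma collinear_of_cr_eq_zero {p q x : Pt} (hpq : p ≠ q) (h : cr p q x = 0) :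
    Collinear ℝ ({p, q, x} : Set Pt) := by
  rw [collinear_iff_of_mem (Set.mem_insert p {q, x})]
  refine ⟨q - p, fun y hy => ?_⟩
  simp only [Set.mem_insert_iff, Set.mem_singleton_iff] at hy
  rcases hy with rfl | rfl | rfl
  · exact ⟨0, by simp⟩
  · exact ⟨1, by simp⟩
  · have hd : q.1 - p.1 ≠ 0 ∨ q.2 - p.2 ≠ 0 := by
      by_contra hc
      push_neg at hc
      exact hpq (Prod.ext (by linarith [hc.1]) (by linarith [hc.2]))
    simp only [cr] at h
    rcases hd with hd | hd
    · refine ⟨(y.1 - p.1) / (q.1 - p.1), ?_⟩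
      have h1 : ((y.1 - p.1) / (q.1 - p.1)) • (q - p) +ᵥ p
          = (((y.1 - p.1) / (q.1 - p.1)) * (q.1 - p.1) + p.1,
             ((y.1 - p.1) / (q.1 - p.1)) * (q.2 - p.2) + p.2) := by
        simp [Prod.ext_iff, Prod.smul_fst, Prod.smul_snd, vadd_eq_add]
      rw [h1]
      refine (Prod.ext ?_ ?_).symm
      · field_simp
        ring
      · field_simp
        linear_combination -h
    · refine ⟨(y.2 - p.2) / (q.2 - p.2), ?_⟩
      have h1 : ((y.2 - p.2) / (q.2 - p.2)) • (q - p) +ᵥ p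
          = (((y.2 - p.2) / (q.2 - p.2)) * (q.1 - p.1) + p.1,
             ((y.2 - p.2) / (q.2 - p.2)) * (q.2 - p.2) + p.2) := by
        simp [Prod.ext_iff, Prod.smul_fst, Prod.smul_snd, vadd_eq_add]
      rw [h1]
      refine (Prod.ext ?_ ?_).symm
      · field_simp
        linear_combination h
      · field_simp
        ring

lemma collinear_of_mem_openSegments {w u u' z : Pt}
    (h1 : z ∈ openSegment ℝ w u) (h2 : z ∈ openSegment ℝ w u') :
    Collinear ℝ ({w, u, u'} : Set Pt) := by
  simp only [openSegment, Set.mem_setOf_eq] at h1 h2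
  obtain ⟨a, b, ha, hb, hab, hz1⟩ := h1
  obtain ⟨a', b', ha', hb', hab', hz2⟩ := h2
  have hkey : a • w + b • u = a' • w + b' • u' := hz1.trans hz2.symm
  have h1 := congrArg Prod.fst hkey
  have h2 := congrArg Prod.snd hkey
  simp only [Prod.fst_add, Prod.snd_add, Prod.smul_fst, Prod.smul_snd, smul_eq_mul] at h1 h2
  rw [collinear_iff_of_mem (Set.mem_insert w {u, u'})]
  refine ⟨u - w, fun y hy => ?_⟩
  simp only [Set.mem_insert_iff, Set.mem_singleton_iff] at hy
  rcases hy with rfl | rfl | rfl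
  · exact ⟨0, by simp⟩
  · exact ⟨1, by simp⟩
  · refine ⟨b / b', ?_⟩
    have hbne : b' ≠ 0 := ne_of_gt hb'
    have hgoal : (b / b') • (u - w) +ᵥ w
        = ((b / b') * (u.1 - w.1) + w.1, (b / b') * (u.2 - w.2) + w.2) := by
      simp [Prod.ext_iff, Prod.smul_fst, Prod.smul_snd, vadd_eq_add]
    rw [hgoal]
    refine (Prod.ext ?_ ?_).symm
    · field_simp
      first
      | linear_combination h1 + (hab' - hab) * w.1
      | linear_combination -h1 + (hab - hab') * w.1
      | linear_combination h1 + (hab - hab') * w.1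
      | linear_combination -h1 + (hab' - hab) * w.1
    · field_simp
      first
      | linear_combination h2 + (hab' - hab) * w.2
      | linear_combination -h2 + (hab - hab') * w.2
      | linear_combination h2 + (hab - hab') * w.2
      | linear_combination -h2 + (hab' - hab) * w.2

/-- The double star on `S` associated to a directed edge `pq` with
`p, q ∈ S` is a plane spanning tree of `S`. -/
theorem doubleStar_isPlaneSpanningTree (S : Finset Pt) (hgp : GenPos S)
    (p q : Pt) (hp : p ∈ S) (hq : q ∈ S) (hpq : p ≠ q) :
    IsPlaneSpanningTree (doubleStar S p q) := by
  classical
  set V := {x // x ∈ S}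
  set G := doubleStar S p q with hGdef
  set P : V := ⟨p, hp⟩ with hPdef
  set Q : V := ⟨q, hq⟩ with hQdef
  have hPQ : P ≠ Q := fun h => hpq (congrArg Subtype.val h)
  have hcrp : cr p q p = 0 := cr_self_left p q
  have hcrq : cr p q q = 0 := cr_self_right p q
  have hleft : ∀ x : Pt, leftOf p q x ↔ 0 < cr p q x := fun _ => Iff.rfl
  have hright : ∀ x : Pt, rightOf p q x ↔ cr p q x < 0 := fun _ => Iff.rfl
  have hadj : ∀ a b : V, G.Adj a b ↔ a ≠ b ∧
      ((((a:Pt) = p ∧ (b:Pt) = q) ∨ ((a:Pt) = p ∧ leftOf p q (b:Pt)) ∨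
        ((a:Pt) = q ∧ rightOf p q (b:Pt))) ∨
       (((b:Pt) = p ∧ (a:Pt) = q) ∨ ((b:Pt) = p ∧ leftOf p q (a:Pt)) ∨
        ((b:Pt) = q ∧ rightOf p q (a:Pt)))) :=
    fun a b => SimpleGraph.fromRel_adj _ a b
  have hside : ∀ x : Pt, x ∈ S → x ≠ p → x ≠ q → cr p q x ≠ 0 := by
    intro x hx hxp hxq h0
    exact hgp p hp q hq x hx hpq (Ne.symm hxp) (Ne.symm hxq)
      (collinear_of_cr_eq_zero hpq h0)
  -- normalized description of edges
  have hnorm : ∀ a b : V, G.Adj a b →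
      ∃ u v : Pt, u ∈ S ∧ v ∈ S ∧
        s((a:Pt),(b:Pt)) = s(u,v) ∧
        openSegment ℝ (a:Pt) (b:Pt) = openSegment ℝ u v ∧
        ((u = p ∧ (v = q ∨ 0 < cr p q v)) ∨ (u = q ∧ cr p q v < 0)) := by
    intro a b hab
    rw [hadj] at hab
    obtain ⟨hne, hrel⟩ := hab
    rcases hrel with (⟨h1,h2⟩|⟨h1,h2⟩|⟨h1,h2⟩)|(⟨h1,h2⟩|⟨h1,h2⟩|⟨h1,h2⟩)
    · exact ⟨(a:Pt), (b:Pt), a.2, b.2, rfl, rfl, Or.inl ⟨h1, Or.inl h2⟩⟩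
    · exact ⟨(a:Pt), (b:Pt), a.2, b.2, rfl, rfl, Or.inl ⟨h1, Or.inr ((hleft _).mp h2)⟩⟩
    · exact ⟨(a:Pt), (b:Pt), a.2, b.2, rfl, rfl, Or.inr ⟨h1, (hright _).mp h2⟩⟩
    · exact ⟨(b:Pt), (a:Pt), b.2, a.2, Sym2.eq_swap, openSegment_symm ℝ _ _,
        Or.inl ⟨h1, Or.inl h2⟩⟩
    · exact ⟨(b:Pt), (a:Pt), b.2, a.2, Sym2.eq_swap, openSegment_symm ℝ _ _,
        Or.inl ⟨h1, Or.inr ((hleft _).mp h2)⟩⟩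
    · exact ⟨(b:Pt), (a:Pt), b.2, a.2, Sym2.eq_swap, openSegment_symm ℝ _ _,
        Or.inr ⟨h1, (hright _).mp h2⟩⟩
  -- planarity
  have hplane : IsPlaneGraph G := by
    intro a b c d hab hcd hnedge
    obtain ⟨u, v, _, hvS, hsym1, hseg1, hcase1⟩ := hnorm a b hab
    obtain ⟨u', v', _, hvS', hsym2, hseg2, hcase2⟩ := hnorm c d hcd
    have hnedge' : s((a:Pt),(b:Pt)) ≠ s((c:Pt),(d:Pt)) := by
      intro h
      apply hnedge
      apply Sym2.map.injective (Subtype.coe_injective : Function.Injective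
        (fun x : V => (x : Pt)))
      rwa [Sym2.map_pair_eq, Sym2.map_pair_eq]
    rw [hsym1, hsym2] at hnedge'
    rw [hseg1, hseg2, Set.eq_empty_iff_forall_notMem]
    rintro z ⟨hz1, hz2⟩
    rcases hcase1 with ⟨hu, hv⟩ | ⟨hu, hv⟩ <;>
      rcases hcase2 with ⟨hu', hv'⟩ | ⟨hu', hv'⟩ <;>
      rw [hu] at hz1 hnedge' <;> rw [hu'] at hz2 hnedge'
    · -- both segments start at p
      have hpv : p ≠ v := by
        rcases hv with hvq | hv
        · rw [hvq]; exact hpq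
        · exact fun h => by rw [← h, hcrp] at hv; exact lt_irrefl 0 hv
      have hpv' : p ≠ v' := by
        rcases hv' with hvq | hv'
        · rw [hvq]; exact hpq
        · exact fun h => by rw [← h, hcrp] at hv'; exact lt_irrefl 0 hv'
      have hvv' : v ≠ v' := fun h => hnedge' (by rw [h])
      exact hgp p hp v hvS v' hvS' hpv hpv' hvv'
        (collinear_of_mem_openSegments hz1 hz2)
    · -- first from p, second from q
      rcases hv with hvq | hv
      · -- first segment is pq, second from q
        rw [hvq] at hz1
        have hqv' : q ≠ v' := fun h => by rw [← h, hcrq] at hv'; exact lt_irrefl 0 hv'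
        have hpv' : p ≠ v' := fun h => by rw [← h, hcrp] at hv'; exact lt_irrefl 0 hv'
        have hz1' : z ∈ openSegment ℝ q p := by rwa [openSegment_symm] at hz1
        exact hgp q hq p hp v' hvS' (Ne.symm hpq) hqv' hpv'
          (collinear_of_mem_openSegments hz1' hz2)
      · have h1 := cr_pos_of_mem p q v hv hz1
        have h2 := cr_neg_of_mem p q v' hv' hz2
        linarith
    · -- first from q, second from p
      rcases hv' with hvq | hv'
      · rw [hvq] at hz2
        have hqv : q ≠ v := fun h => by rw [← h, hcrq] at hv; exact lt_irrefl 0 hv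
        have hpv : p ≠ v := fun h => by rw [← h, hcrp] at hv; exact lt_irrefl 0 hv
        have hz2' : z ∈ openSegment ℝ q p := by rwa [openSegment_symm] at hz2
        exact hgp q hq p hp v hvS (Ne.symm hpq) hqv hpv
          (collinear_of_mem_openSegments hz2' hz1)
      · have h1 := cr_pos_of_mem p q v' hv' hz2
        have h2 := cr_neg_of_mem p q v hv hz1
        linarith
    · -- both from q
      have hqv : q ≠ v := fun h => by rw [← h, hcrq] at hv; exact lt_irrefl 0 hv
      have hqv' : q ≠ v' := fun h => by rw [← h, hcrq] at hv'; exact lt_irrefl 0 hv'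
      have hvv' : v ≠ v' := fun h => hnedge' (by rw [h])
      exact hgp q hq v hvS v' hvS' hqv hqv' hvv'
        (collinear_of_mem_openSegments hz1 hz2)
  -- connectivity
  have hadjPQ : G.Adj P Q := (hadj P Q).mpr ⟨hPQ, Or.inl (Or.inl ⟨rfl, rfl⟩)⟩
  have hreach : ∀ x : V, G.Reachable x P := by
    intro x
    by_cases hxp : (x:Pt) = p
    · have : x = P := Subtype.ext hxp
      rw [this]
    · by_cases hxq : (x:Pt) = q
      · have : x = Q := Subtype.ext hxq
        rw [this]
        exact hadjPQ.symm.reachable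
      · have h0 := hside (x:Pt) x.2 hxp hxq
        rcases lt_or_gt_of_ne h0 with hneg | hpos
        · have hQx : G.Adj Q x :=
            (hadj Q x).mpr ⟨fun h => hxq (congrArg Subtype.val h).symm,
              Or.inl (Or.inr (Or.inr ⟨rfl, (hright _).mpr hneg⟩))⟩
          exact hQx.symm.reachable.trans hadjPQ.symm.reachable
        · have hPx : G.Adj P x :=
            (hadj P x).mpr ⟨fun h => hxp (congrArg Subtype.val h).symm,
              Or.inl (Or.inr (Or.inl ⟨rfl, (hleft _).mpr hpos⟩))⟩
          exact hPx.symm.reachable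
  have hconn : G.Connected := by
    haveI : Nonempty V := ⟨P⟩
    exact SimpleGraph.Connected.mk fun x y => (hreach x).trans (hreach y).symm
  -- degree bound away from p and q
  have hdeg : ∀ x y w : V, (x:Pt) ≠ p → (x:Pt) ≠ q → G.Adj x y → G.Adj x w → y = w := by
    intro x y w hxp hxq h1 h2
    rw [hadj] at h1 h2
    obtain ⟨-, h1⟩ := h1
    obtain ⟨-, h2⟩ := h2
    have key : ∀ z : V, ((((x:Pt) = p ∧ (z:Pt) = q) ∨ ((x:Pt) = p ∧ leftOf p q (z:Pt)) ∨
        ((x:Pt) = q ∧ rightOf p q (z:Pt))) ∨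
       (((z:Pt) = p ∧ (x:Pt) = q) ∨ ((z:Pt) = p ∧ leftOf p q (x:Pt)) ∨
        ((z:Pt) = q ∧ rightOf p q (x:Pt)))) →
        ((z:Pt) = p ∧ 0 < cr p q (x:Pt)) ∨ ((z:Pt) = q ∧ cr p q (x:Pt) < 0) := by
      rintro z ((⟨h,-⟩|⟨h,-⟩|⟨h,-⟩)|(⟨h,h'⟩|⟨h,h'⟩|⟨h,h'⟩))
      · exact absurd h hxp
      · exact absurd h hxp
      · exact absurd h hxq
      · exact absurd h' hxq
      · exact Or.inl ⟨h, (hleft _).mp h'⟩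
      · exact Or.inr ⟨h, (hright _).mp h'⟩
    rcases key y h1 with ⟨hy, hs⟩ | ⟨hy, hs⟩ <;> rcases key w h2 with ⟨hw, hs'⟩ | ⟨hw, hs'⟩
    · exact Subtype.ext (hy.trans hw.symm)
    · linarith
    · linarith
    · exact Subtype.ext (hy.trans hw.symm)
  -- acyclicity
  have hacyc : G.IsAcyclic := by
    intro v c hc
    have h3 := hc.three_le_length
    have hnodup := hc.support_nodup
    -- find a vertex of the cycle different from P and Q
    have hex : ∃ x : V, x ∈ c.support.tail ∧ x ≠ P ∧ x ≠ Q := by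
      by_contra hall
      push_neg at hall
      have hsub : c.support.tail.toFinset ⊆ ({P, Q} : Finset V) := by
        intro x hx
        rw [List.mem_toFinset] at hx
        rcases Classical.em (x = P) with h | h
        · simp [h]
        · rcases Classical.em (x = Q) with h' | h'
          · simp [h']
          · exact absurd (hall x hx h) h'
      have hcard := Finset.card_le_card hsub
      rw [List.toFinset_card_of_nodup hnodup] at hcard
      have hlen : c.support.tail.length = c.length := by
        have := c.length_support
        simp [List.length_tail, this]
      rw [hlen] at hcard
      have : ({P, Q} : Finset V).card ≤ 2 := Finset.card_insert_le _ _ |>.trans (by simp)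
      omega
    obtain ⟨x, hxt, hxP, hxQ⟩ := hex
    have hxp : (x:Pt) ≠ p := fun h => hxP (Subtype.ext h)
    have hxq : (x:Pt) ≠ q := fun h => hxQ (Subtype.ext h)
    have hxsup : x ∈ c.support := List.mem_of_mem_tail hxt
    have hc' : (c.rotate x hxsup).IsCycle := hc.rotate hxsup
    have hnn : ¬ (c.rotate x hxsup).Nil := hc'.not_nil
    rw [SimpleGraph.Walk.not_nil_iff] at hnn
    obtain ⟨y, hxy, rest, hceq⟩ := hnn
    have hlen3 := hc'.three_le_length
    obtain ⟨htrail, -, -⟩ := (SimpleGraph.Walk.isCycle_def _).mp hc'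
    have hnodupE := (SimpleGraph.Walk.isTrail_def _).mp htrail
    have hedges_eq : (c.rotate x hxsup).edges = s(x, y) :: rest.edges := by
      rw [hceq, SimpleGraph.Walk.edges_cons]
    rw [hedges_eq] at hnodupE
    have hnotmem : s(x, y) ∉ rest.edges := (List.nodup_cons.mp hnodupE).1
    have hlen_eq : (c.rotate x hxsup).length = rest.length + 1 := by
      rw [hceq, SimpleGraph.Walk.length_cons]
    -- extract the last edge of rest, which is incident to x
    have hrevnn : ¬ rest.reverse.Nil := by
      rw [SimpleGraph.Walk.not_nil_iff_lt_length, SimpleGraph.Walk.length_reverse]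
      rw [hlen_eq] at hlen3
      omega
    rw [SimpleGraph.Walk.not_nil_iff] at hrevnn
    obtain ⟨w, hxw, rest', hreq⟩ := hrevnn
    have hedge : s(x, w) ∈ rest.edges := by
      have hmem : s(x, w) ∈ rest.reverse.edges := by
        rw [hreq, SimpleGraph.Walk.edges_cons]
        exact List.mem_cons_self
      rwa [SimpleGraph.Walk.edges_reverse, List.mem_reverse] at hmem
    have hyw : y = w := hdeg x y w hxp hxq hxy hxw
    subst hyw
    exact hnotmem hedge
  exact ⟨⟨hconn, hacyc⟩, hplane⟩
end

section
/- Every set S of n ≥ 4 points in the plane in general position admits at least 2 pairwise edge-disjoint plane spanning trees. -/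
noncomputable section

def cross (p q x : Pt) : ℝ := (q.1 - p.1) * (x.2 - p.2) - (q.2 - p.2) * (x.1 - p.1)

lemma cross_self_left (p q : Pt) : cross p q p = 0 := by simp [cross]

lemma cross_self_right (p q : Pt) : cross p q q = 0 := by simp [cross]; ring

lemma cross_swap (p q x : Pt) : cross q p x = - cross p q x := by simp [cross]; ring

lemma cross_combo {a b : ℝ} (h : a + b = 1) (p q x y : Pt) :
    cross p q (a • x + b • y) = a * cross p q x + b * cross p q y := by
  have hb : b = 1 - a := by linarith
  subst hb
  simp [cross, Prod.smul_def, smul_eq_mul, Prod.fst_add, Prod.snd_add]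
  ring

lemma cross_combo3 {a b c : ℝ} (h : a + b + c = 1) (p q x y z : Pt) :
    cross p q (a • x + b • y + c • z) = a * cross p q x + b * cross p q y + c * cross p q z := by
  have hc : c = 1 - a - b := by linarith
  subst hc
  simp [cross, Prod.smul_def, smul_eq_mul, Prod.fst_add, Prod.snd_add]
  ring

/-- If the cross product vanishes, the three points are collinear. -/
lemma collinear_of_cross_eq_zero {p q x : Pt} (h : cross p q x = 0) :
    Collinear ℝ ({p, q, x} : Set Pt) := by
  by_cases hpq : p = q
  · subst hpq
    have : ({p, p, x} : Set Pt) = {p, x} := by ext y; simp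
    rw [this]
    exact collinear_pair ℝ p x
  · rw [collinear_iff_of_mem (Set.mem_insert p {q, x})]
    refine ⟨q - p, ?_⟩
    intro y hy
    rcases hy with rfl | rfl | rfl
    · exact ⟨0, by simp⟩
    · exact ⟨1, by simp⟩
    · -- use cross = 0
      have hne : q.1 - p.1 ≠ 0 ∨ q.2 - p.2 ≠ 0 := by
        by_contra hcon
        push_neg at hcon
        apply hpq
        have h1 : q.1 = p.1 := by linarith [hcon.1]
        have h2 : q.2 = p.2 := by linarith [hcon.2]
        exact Prod.ext h1.symm h2.symm
      rcases hne with hne | hne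
      · refine ⟨(y.1 - p.1) / (q.1 - p.1), ?_⟩
        have h2 : y.2 - p.2 = (q.2 - p.2) * (y.1 - p.1) / (q.1 - p.1) := by
          field_simp
          unfold cross at h; nlinarith [h]
        have : y = (y.1, y.2) := rfl
        rw [this]
        apply Prod.ext <;> simp [Prod.smul_def, smul_eq_mul]
        · field_simp; ring
        · have h3 : y.2 = (q.2 - p.2) * (y.1 - p.1) / (q.1 - p.1) + p.2 := by linarith
          rw [h3]; ring
      · refine ⟨(y.2 - p.2) / (q.2 - p.2), ?_⟩
        have h2 : y.1 - p.1 = (q.1 - p.1) * (y.2 - p.2) / (q.2 - p.2) := by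
          field_simp
          unfold cross at h; nlinarith [h]
        have : y = (y.1, y.2) := rfl
        rw [this]
        apply Prod.ext <;> simp [Prod.smul_def, smul_eq_mul]
        · have h3 : y.1 = (q.1 - p.1) * (y.2 - p.2) / (q.2 - p.2) + p.1 := by linarith
          rw [h3]; ring
        · field_simp; ring

lemma mem_openSegment_iff {x y z : Pt} :
    z ∈ openSegment ℝ x y ↔ ∃ a b : ℝ, 0 < a ∧ 0 < b ∧ a + b = 1 ∧ a • x + b • y = z :=
  Iff.rfl

/-- Open segments sharing the endpoint `p`, with non-collinear other endpoints, are disjoint. -/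
lemma openSegment_disjoint_shared {p x y : Pt} (h : cross p x y ≠ 0) :
    openSegment ℝ p x ∩ openSegment ℝ p y = ∅ := by
  ext z
  simp only [Set.mem_inter_iff, Set.mem_empty_iff_false, iff_false]
  rintro ⟨⟨a, b, ha, hb, hab, hz⟩, ⟨c, d, hc, hd, hcd, hz'⟩⟩
  have e1 : cross p x z = 0 := by
    rw [← hz, cross_combo hab]
    rw [cross_self_left, cross_self_right]; ring
  have e2 : cross p x z = d * cross p x y := by
    rw [← hz', cross_combo hcd, cross_self_left]; ring
  rw [e1] at e2
  have := mul_ne_zero (ne_of_gt hd) h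
  exact this e2.symm

/-- Separation lemma: if the functional `cross u v ·` is nonnegative on `{a, b}` and positive
somewhere, and nonpositive on `{c, d}`, the open segments are disjoint. -/
lemma openSegment_disjoint_sep {u v a b c d : Pt}
    (ha : 0 ≤ cross u v a) (hb : 0 ≤ cross u v b) (hab : 0 < cross u v a + cross u v b)
    (hc : cross u v c ≤ 0) (hd : cross u v d ≤ 0) :
    openSegment ℝ a b ∩ openSegment ℝ c d = ∅ := by
  ext z
  simp only [Set.mem_inter_iff, Set.mem_empty_iff_false, iff_false]
  rintro ⟨⟨s, t, hs, ht, hst, hz⟩, ⟨s', t', hs', ht', hst', hz'⟩⟩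
  have e1 : cross u v z = s * cross u v a + t * cross u v b := by
    rw [← hz, cross_combo hst]
  have e2 : cross u v z = s' * cross u v c + t' * cross u v d := by
    rw [← hz', cross_combo hst']
  nlinarith [mul_nonneg hs.le ha, mul_nonneg ht.le hb, mul_nonpos_of_nonneg_of_nonpos hs'.le hc,
    mul_nonpos_of_nonneg_of_nonpos ht'.le hd, mul_pos hs ht]



open SimpleGraph

lemma reachable_root {V : Type} (G : SimpleGraph V) (r : V) (f : V → V) (ρ : V → ℕ)
    (hadj : ∀ v, v ≠ r → G.Adj v (f v)) (hρ : ∀ v, v ≠ r → ρ (f v) < ρ v) :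
    ∀ v, G.Reachable v r := by
  have key : ∀ n v, ρ v ≤ n → G.Reachable v r := by
    intro n
    induction n with
    | zero =>
      intro v hv
      by_cases h : v = r
      · rw [h]
      · exact absurd (hρ v h) (by omega)
    | succ n ih =>
      intro v hv
      by_cases h : v = r
      · rw [h]
      · exact ((hadj v h).reachable).trans (ih (f v) (by have := hρ v h; omega))
  exact fun v => key (ρ v) v le_rfl

lemma isTree_of_parent {V : Type} [Fintype V] (G : SimpleGraph V) (r : V) (f : V → V) (ρ : V → ℕ)
    (hfr : f r = r)
    (hadj : ∀ v, v ≠ r → G.Adj v (f v)) (hρ : ∀ v, v ≠ r → ρ (f v) < ρ v)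
    (hshape : ∀ v w, G.Adj v w → w = f v ∨ v = f w) : G.IsTree := by
  constructor
  · exact (connected_iff G).mpr ⟨fun u v => (reachable_root G r f ρ hadj hρ u).trans
      (reachable_root G r f ρ hadj hρ v).symm, ⟨r⟩⟩
  · -- acyclic
    intro v c hc
    classical
    have hsupne : c.support.toFinset.Nonempty :=
      ⟨v, List.mem_toFinset.mpr c.start_mem_support⟩
    obtain ⟨u, hu, humax⟩ := c.support.toFinset.exists_max_image ρ hsupne
    rw [List.mem_toFinset] at hu
    have hc' := hc.rotate hu
    set c' := c.rotate u hu with hc'def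
    have hsupp : ∀ w, w ∈ c'.support → ρ w ≤ ρ u := by
      intro w hw
      rcases (Walk.mem_support_iff c').mp hw with rfl | hw'
      · exact le_rfl
      · apply humax
        rw [List.mem_toFinset]
        have : w ∈ c.support.tail := ((Walk.support_rotate c u hu).mem_iff).mp hw'
        exact List.mem_of_mem_tail this
    clear_value c'
    clear hc hu humax hc'def hsupne
    have hnn : ¬ c'.Nil := hc'.not_nil
    obtain ⟨x, h, q, rfl⟩ := Walk.not_nil_iff.mp hnn
    -- h : G.Adj u x, q : G.Walk x u
    by_cases hqnil : q.reverse.Nil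
    · have hlen : q.length = 0 := by
        have := Walk.nil_iff_length_eq.mp hqnil
        simpa [Walk.length_reverse] using this
      have : x = u := Walk.eq_of_length_eq_zero hlen
      subst this
      exact G.loopless.irrefl x h
    · obtain ⟨y, h'0, q', hq⟩ := Walk.not_nil_iff.mp hqnil
      have h' : G.Adj u y := h'0
      have hyx : y ∈ q.support := by
        have : y ∈ q.reverse.support := by rw [hq]; simp [Walk.support_cons]
        rwa [Walk.support_reverse, List.mem_reverse] at this
      have hxsup : x ∈ q.support := q.start_mem_support
      have hedge_y : s(u, y) ∈ q.edges := by
        have : s(u, y) ∈ q.reverse.edges := by rw [hq]; simp [Walk.edges_cons]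
        rwa [Walk.edges_reverse, List.mem_reverse] at this
      have hnodup : (Walk.cons h q).edges.Nodup := hc'.edges_nodup
      rw [Walk.edges_cons, List.nodup_cons] at hnodup
      have hxy : x ≠ y := by
        rintro rfl
        exact hnodup.1 hedge_y
      have hru : ∀ w, G.Adj u w → w ∈ q.support → w = f u := by
        intro w hw hwsup
        rcases hshape u w hw with h1 | h1
        · exact h1
        · exfalso
          have h2 : ρ w ≤ ρ u := hsupp w (by rw [Walk.support_cons]; right; exact hwsup)
          have h3 : w ≠ r := by
            rintro rfl
            rw [hfr] at h1
            subst h1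
            exact G.loopless.irrefl _ hw
          have := hρ w h3
          rw [← h1] at this
          omega
      exact hxy ((hru x h hxsup).trans (hru y h' hyx).symm)

section Helpers

lemma leftOf_iff (p q x : Pt) : leftOf p q x ↔ 0 < cross p q x := Iff.rfl

lemma rightOf_iff (p q x : Pt) : rightOf p q x ↔ cross p q x < 0 := Iff.rfl

lemma cross_degenerate (p x : Pt) : cross p p x = 0 := by simp [cross]

lemma cross_cyclic (p q x : Pt) : cross q x p = cross p q x := by simp [cross]; ring

lemma genpos_cross_ne {S : Finset Pt} (hgp : GenPos S) {a b c : Pt}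
    (ha : a ∈ S) (hb : b ∈ S) (hc : c ∈ S) (hab : a ≠ b) (hac : a ≠ c) (hbc : b ≠ c) :
    cross a b c ≠ 0 :=
  fun h => hgp a ha b hb c hc hab hac hbc (collinear_of_cross_eq_zero h)

end Helpers

section DoubleStar

variable {S : Finset Pt} {p q : Pt}

lemma ds_adj_iff {a b : {x // x ∈ S}} :
    (doubleStar S p q).Adj a b ↔ a ≠ b ∧
      ((((a : Pt) = p ∧ (b : Pt) = q) ∨ ((a : Pt) = p ∧ leftOf p q (b : Pt)) ∨
        ((a : Pt) = q ∧ rightOf p q (b : Pt))) ∨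
       (((b : Pt) = p ∧ (a : Pt) = q) ∨ ((b : Pt) = p ∧ leftOf p q (a : Pt)) ∨
        ((b : Pt) = q ∧ rightOf p q (a : Pt)))) := by
  constructor
  · rintro ⟨hne, h⟩; exact ⟨hne, h⟩
  · rintro ⟨hne, h⟩; exact ⟨hne, h⟩

/-- The double star is a spanning tree. -/
lemma ds_isTree (hgp : GenPos S) (hp : p ∈ S) (hq : q ∈ S) (hpq : p ≠ q) :
    (doubleStar S p q).IsTree := by
  classical
  refine isTree_of_parent (doubleStar S p q) ⟨p, hp⟩
    (fun v => if rightOf p q (v : Pt) then ⟨q, hq⟩ else ⟨p, hp⟩)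
    (fun v => if (v : Pt) = p then 0 else if (v : Pt) = q then 1 else 2)
    ?_ ?_ ?_ ?_
  · -- f P = P
    have h0 : ¬ rightOf p q p := by
      rw [rightOf_iff, cross_self_left]; exact lt_irrefl 0
    simp only [if_neg h0]
  · -- adjacency to parent
    intro v hv
    have hvp : (v : Pt) ≠ p := fun h => hv (Subtype.ext h)
    have hnrq : ¬ rightOf p q q := by
      rw [rightOf_iff, cross_self_right]; exact lt_irrefl 0
    by_cases hvq : (v : Pt) = q
    · have hnr : ¬ rightOf p q (v : Pt) := by rw [hvq]; exact hnrq
      have hAdj : (doubleStar S p q).Adj v ⟨p, hp⟩ := by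
        rw [ds_adj_iff]
        exact ⟨fun h => hvp (congrArg Subtype.val h), Or.inr (Or.inl ⟨rfl, hvq⟩)⟩
      beta_reduce
      rw [if_neg hnr]; exact hAdj
    · have hcr : cross p q (v : Pt) ≠ 0 := genpos_cross_ne hgp hp hq v.2 hpq
        (fun h => hvp h.symm) (fun h => hvq h.symm)
      beta_reduce
      by_cases hr : rightOf p q (v : Pt)
      · rw [if_pos hr]
        rw [ds_adj_iff]
        exact ⟨fun h => hvq (congrArg Subtype.val h), Or.inr (Or.inr (Or.inr ⟨rfl, hr⟩))⟩
      · have hl : leftOf p q (v : Pt) := by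
          rw [leftOf_iff]
          rcases lt_or_gt_of_ne hcr with h | h
          · exact absurd h hr
          · exact h
        rw [if_neg hr]
        rw [ds_adj_iff]
        exact ⟨fun h => hvp (congrArg Subtype.val h), Or.inr (Or.inr (Or.inl ⟨rfl, hl⟩))⟩
  · -- rank decreases
    intro v hv
    have hvp : (v : Pt) ≠ p := fun h => hv (Subtype.ext h)
    beta_reduce
    by_cases hr : rightOf p q (v : Pt)
    · have hvq : (v : Pt) ≠ q := by
        intro h; rw [rightOf_iff, h, cross_self_right] at hr; exact lt_irrefl 0 hr
      rw [if_pos hr]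
      have h1 : q ≠ p := Ne.symm hpq
      simp [h1, hvp, hvq]
    · rw [if_neg hr]
      simp only [hvp]
      by_cases hvq : (v : Pt) = q <;> simp [hvp, hvq, Ne.symm hpq]
  · -- shape
    intro v w hadj
    rw [ds_adj_iff] at hadj
    have hnrq : ¬ rightOf p q q := by
      rw [rightOf_iff, cross_self_right]; exact lt_irrefl 0
    obtain ⟨hne, h | h⟩ := hadj
    · right
      beta_reduce
      rcases h with ⟨hv, hw⟩ | ⟨hv, hw⟩ | ⟨hv, hw⟩
      · have h0 : ¬ rightOf p q (w : Pt) := by rw [hw]; exact hnrq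
        rw [if_neg h0]; exact Subtype.ext hv
      · have h0 : ¬ rightOf p q (w : Pt) := by
          rw [rightOf_iff]; rw [leftOf_iff] at hw; linarith
        rw [if_neg h0]; exact Subtype.ext hv
      · rw [if_pos hw]; exact Subtype.ext hv
    · left
      beta_reduce
      rcases h with ⟨hw, hv⟩ | ⟨hw, hv⟩ | ⟨hw, hv⟩
      · have h0 : ¬ rightOf p q (v : Pt) := by rw [hv]; exact hnrq
        rw [if_neg h0]; exact Subtype.ext hw
      · have h0 : ¬ rightOf p q (v : Pt) := by
          rw [rightOf_iff]; rw [leftOf_iff] at hv; linarith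
        rw [if_neg h0]; exact Subtype.ext hw
      · rw [if_pos hv]; exact Subtype.ext hw

/-- Core geometric disjointness for double-star edges, at the level of points. -/
lemma ds_core (hgp : GenPos S) (hp : p ∈ S) (hq : q ∈ S) (hpq : p ≠ q) :
    ∀ u v w z : Pt, u ∈ S → v ∈ S → w ∈ S → z ∈ S →
      ((u = p ∧ v = q) ∨ (u = p ∧ leftOf p q v) ∨ (u = q ∧ rightOf p q v)) →
      ((w = p ∧ z = q) ∨ (w = p ∧ leftOf p q z) ∨ (w = q ∧ rightOf p q z)) →
      s(u, v) ≠ s(w, z) →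
      openSegment ℝ u v ∩ openSegment ℝ w z = ∅ := by
  intro u v w z hu hv hw hz h1 h2 hne
  rcases h1 with ⟨h1a, h1b⟩ | ⟨h1a, h1b⟩ | ⟨h1a, h1b⟩ <;>
    rcases h2 with ⟨h2a, h2b⟩ | ⟨h2a, h2b⟩ | ⟨h2a, h2b⟩ <;>
    rw [h1a] at hne hu ⊢ <;> rw [h2a] at hne hw ⊢
  · rw [h1b] at hne ⊢; rw [h2b] at hne; exact absurd rfl hne
  · -- pq vs p-z
    rw [h1b]
    exact openSegment_disjoint_shared (by rw [leftOf_iff] at h2b; linarith)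
  · -- pq vs q-z
    rw [h1b, openSegment_symm ℝ p q]
    exact openSegment_disjoint_shared
      (by rw [rightOf_iff] at h2b; rw [cross_swap]; linarith)
  · -- p-v vs pq
    rw [h2b]
    refine openSegment_disjoint_shared ?_
    rw [leftOf_iff] at h1b
    have hvq : v ≠ q := fun h => by rw [h, cross_self_right] at h1b; linarith
    have hpv : p ≠ v := fun h => by rw [← h, cross_self_left] at h1b; linarith
    exact genpos_cross_ne hgp hp hv hq hpv hpq hvq
  · -- p-v vs p-z
    refine openSegment_disjoint_shared ?_
    rw [leftOf_iff] at h1b h2b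
    have hvz : v ≠ z := fun h => hne (by rw [h])
    have hpv : p ≠ v := fun h => by rw [← h, cross_self_left] at h1b; linarith
    have hpz : p ≠ z := fun h => by rw [← h, cross_self_left] at h2b; linarith
    exact genpos_cross_ne hgp hp hv hz hpv hpz hvz
  · -- p-v vs q-z
    rw [leftOf_iff] at h1b; rw [rightOf_iff] at h2b
    refine openSegment_disjoint_sep (u := p) (v := q) ?_ ?_ ?_ ?_ ?_
    · rw [cross_self_left]
    · linarith
    · rw [cross_self_left]; linarith
    · rw [cross_self_right]
    · linarith
  · -- q-v vs pq
    rw [h2b, openSegment_symm ℝ p q]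
    refine openSegment_disjoint_shared ?_
    rw [rightOf_iff] at h1b
    have hcyc : cross q v p = cross p q v := cross_cyclic p q v
    rw [hcyc]
    linarith
  · -- q-v vs p-z
    rw [leftOf_iff] at h2b; rw [rightOf_iff] at h1b
    rw [Set.inter_comm]
    refine openSegment_disjoint_sep (u := p) (v := q) ?_ ?_ ?_ ?_ ?_
    · rw [cross_self_left]
    · linarith
    · rw [cross_self_left]; linarith
    · rw [cross_self_right]
    · linarith
  · -- q-v vs q-z
    refine openSegment_disjoint_shared ?_
    rw [rightOf_iff] at h1b h2b
    have hvz : v ≠ z := fun h => hne (by rw [h])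
    have hqv : q ≠ v := fun h => by rw [← h, cross_self_right] at h1b; linarith
    have hqz : q ≠ z := fun h => by rw [← h, cross_self_right] at h2b; linarith
    exact genpos_cross_ne hgp hq hv hz hqv hqz hvz

/-- The double star is drawn without crossings. -/
lemma ds_isPlane (hgp : GenPos S) (hp : p ∈ S) (hq : q ∈ S) (hpq : p ≠ q) :
    IsPlaneGraph (doubleStar S p q) := by
  have core := ds_core hgp hp hq hpq
  intro a b c d hab hcd hne
  rw [ds_adj_iff] at hab hcd
  obtain ⟨hne1, h1⟩ := hab
  obtain ⟨hne2, h2⟩ := hcd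
  have hnePt : ∀ (x y w z : {t // t ∈ S}), s(x,y) ≠ s(w,z) →
      s((x:Pt),(y:Pt)) ≠ s((w:Pt),(z:Pt)) := by
    intro x y w z h hcon
    apply h
    rw [Sym2.eq_iff] at hcon ⊢
    rcases hcon with ⟨e1, e2⟩ | ⟨e1, e2⟩
    · exact Or.inl ⟨Subtype.ext e1, Subtype.ext e2⟩
    · exact Or.inr ⟨Subtype.ext e1, Subtype.ext e2⟩
  rcases h1 with h1 | h1 <;> rcases h2 with h2 | h2
  · exact core _ _ _ _ a.2 b.2 c.2 d.2 h1 h2 (hnePt _ _ _ _ hne)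
  · rw [openSegment_symm ℝ (c : Pt) (d : Pt)]
    exact core _ _ _ _ a.2 b.2 d.2 c.2 h1 h2
      (by have := hnePt _ _ _ _ hne; rwa [Sym2.eq_swap (a := (c:Pt))] at this)
  · rw [openSegment_symm ℝ (a : Pt) (b : Pt)]
    exact core _ _ _ _ b.2 a.2 c.2 d.2 h1 h2
      (by have := hnePt _ _ _ _ hne; rwa [Sym2.eq_swap (a := (a:Pt))] at this)
  · rw [openSegment_symm ℝ (a : Pt) (b : Pt), openSegment_symm ℝ (c : Pt) (d : Pt)]
    exact core _ _ _ _ b.2 a.2 d.2 c.2 h1 h2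
      (by have := hnePt _ _ _ _ hne
          rwa [Sym2.eq_swap (a := (a:Pt)), Sym2.eq_swap (a := (c:Pt))] at this)

end DoubleStar

section Cross4

/-- The four orientation conditions stating that segment `pq` crosses segment `rs`. -/
def Cross4 (p q r s : Pt) : Prop :=
  0 < cross p q r ∧ cross p q s < 0 ∧ 0 < cross r s q ∧ cross r s p < 0

lemma cross4_false1 {p q r s A B : Pt}
    (c3 : 0 < cross r s q) (c4 : cross r s p < 0)
    (h1 : (A = p ∧ B = q) ∨ (A = p ∧ leftOf p q B) ∨ (A = q ∧ rightOf p q B))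
    (h2 : (A = r ∧ B = s) ∨ (A = r ∧ leftOf r s B) ∨ (A = s ∧ rightOf r s B)) : False := by
  have eA : A = p ∨ A = q := by
    rcases h1 with ⟨h, _⟩ | ⟨h, _⟩ | ⟨h, _⟩
    exacts [Or.inl h, Or.inl h, Or.inr h]
  have eA' : A = r ∨ A = s := by
    rcases h2 with ⟨h, _⟩ | ⟨h, _⟩ | ⟨h, _⟩
    exacts [Or.inl h, Or.inl h, Or.inr h]
  rcases eA with hA | hA <;> rcases eA' with hA' | hA' <;> rw [hA] at hA'
  · rw [hA'] at c4; rw [cross_self_left] at c4; exact lt_irrefl 0 c4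
  · rw [hA'] at c4; rw [cross_self_right] at c4; exact lt_irrefl 0 c4
  · rw [hA'] at c3; rw [cross_self_left] at c3; exact lt_irrefl 0 c3
  · rw [hA'] at c3; rw [cross_self_right] at c3; exact lt_irrefl 0 c3

lemma cross4_false2 {p q r s A B : Pt}
    (c1 : 0 < cross p q r) (c2 : cross p q s < 0)
    (c3 : 0 < cross r s q) (c4 : cross r s p < 0)
    (h1 : (A = p ∧ B = q) ∨ (A = p ∧ leftOf p q B) ∨ (A = q ∧ rightOf p q B))
    (h2 : (B = r ∧ A = s) ∨ (B = r ∧ leftOf r s A) ∨ (B = s ∧ rightOf r s A)) : False := by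
  simp only [leftOf_iff, rightOf_iff] at h1 h2
  rcases h1 with ⟨hA, hB⟩ | ⟨hA, hB⟩ | ⟨hA, hB⟩ <;>
    rcases h2 with ⟨hB', hA'⟩ | ⟨hB', hA'⟩ | ⟨hB', hA'⟩ <;> rw [hA] at hA'
  · rw [hA'] at c4; rw [cross_self_right] at c4; exact lt_irrefl 0 c4
  · linarith
  · rw [hB] at hB'; rw [← hB'] at c2; rw [cross_self_right] at c2; exact lt_irrefl 0 c2
  · rw [hA'] at c4; rw [cross_self_right] at c4; exact lt_irrefl 0 c4
  · linarith
  · rw [hB'] at hB; linarith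
  · rw [hA'] at c3; rw [cross_self_right] at c3; exact lt_irrefl 0 c3
  · rw [hB'] at hB; linarith
  · linarith

lemma cross4_pt_false {p q r s A B : Pt} (h4 : Cross4 p q r s)
    (h1 : ((A = p ∧ B = q) ∨ (A = p ∧ leftOf p q B) ∨ (A = q ∧ rightOf p q B)) ∨
          ((B = p ∧ A = q) ∨ (B = p ∧ leftOf p q A) ∨ (B = q ∧ rightOf p q A)))
    (h2 : ((A = r ∧ B = s) ∨ (A = r ∧ leftOf r s B) ∨ (A = s ∧ rightOf r s B)) ∨
          ((B = r ∧ A = s) ∨ (B = r ∧ leftOf r s A) ∨ (B = s ∧ rightOf r s A))) : False := by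
  obtain ⟨c1, c2, c3, c4⟩ := h4
  rcases h1 with h1 | h1 <;> rcases h2 with h2 | h2
  · exact cross4_false1 c3 c4 h1 h2
  · exact cross4_false2 c1 c2 c3 c4 h1 h2
  · exact cross4_false2 c1 c2 c3 c4 h1 h2
  · exact cross4_false1 c3 c4 h1 h2

lemma ds_disjoint {S : Finset Pt} {p q r s : Pt} (h4 : Cross4 p q r s) :
    Disjoint (doubleStar S p q).edgeSet (doubleStar S r s).edgeSet := by
  rw [Set.disjoint_left]
  intro e he1 he2
  induction e using Sym2.ind with
  | _ a b =>
    rw [SimpleGraph.mem_edgeSet] at he1 he2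
    rw [ds_adj_iff] at he1 he2
    exact cross4_pt_false h4 he1.2 he2.2

/-- Cross4 forces the four points to be pairwise distinct. -/
lemma cross4_ne {p q r s : Pt} (h4 : Cross4 p q r s) :
    p ≠ q ∧ r ≠ s := by
  obtain ⟨c1, _, c3, _⟩ := h4
  constructor
  · rintro rfl; rw [cross_degenerate] at c1; exact lt_irrefl 0 c1
  · rintro rfl; rw [cross_degenerate] at c3; exact lt_irrefl 0 c3

/-- Main construction in the crossing case. -/
lemma two_trees_of_cross4 {S : Finset Pt} (hgp : GenPos S) {p q r s : Pt}
    (hp : p ∈ S) (hq : q ∈ S) (hr : r ∈ S) (hs : s ∈ S) (h4 : Cross4 p q r s) :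
    ∃ T : Fin 2 → SimpleGraph {x // x ∈ S},
      (∀ i, IsPlaneSpanningTree (T i)) ∧
      (∀ i j, i ≠ j → Disjoint (T i).edgeSet (T j).edgeSet) := by
  obtain ⟨hpq, hrs⟩ := cross4_ne h4
  refine ⟨![doubleStar S p q, doubleStar S r s], ?_, ?_⟩
  · intro i
    fin_cases i
    · exact ⟨ds_isTree hgp hp hq hpq, ds_isPlane hgp hp hq hpq⟩
    · exact ⟨ds_isTree hgp hr hs hrs, ds_isPlane hgp hr hs hrs⟩
  · intro i j hij
    fin_cases i <;> fin_cases j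
    · exact absurd rfl hij
    · exact ds_disjoint h4
    · exact (ds_disjoint h4).symm
    · exact absurd rfl hij

end Cross4

section Radon

/-- Identity relating the two segment functionals. -/
lemma cross_diff_identity (p q r s : Pt) :
    cross p q r - cross p q s = cross r s q - cross r s p := by
  simp [cross]; ring

/-- From a genuine open crossing of two segments we get the orientation conditions. -/
lemma cross4_of_openSeg {S : Finset Pt} (hgp : GenPos S) {p q r s : Pt}
    (hp : p ∈ S) (hq : q ∈ S) (hr : r ∈ S) (hs : s ∈ S)
    (hpq : p ≠ q) (hpr : p ≠ r) (hps : p ≠ s) (hqr : q ≠ r) (hqs : q ≠ s) (hrs : r ≠ s)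
    {z : Pt} (h1 : z ∈ openSegment ℝ p q) (h2 : z ∈ openSegment ℝ r s) :
    Cross4 p q r s ∨ Cross4 p q s r := by
  obtain ⟨a1, a2, ha1, ha2, ha, hz1⟩ := h1
  obtain ⟨b1, b2, hb1, hb2, hb, hz2⟩ := h2
  have hA : cross p q r ≠ 0 := genpos_cross_ne hgp hp hq hr hpq hpr hqr
  have hB : cross p q s ≠ 0 := genpos_cross_ne hgp hp hq hs hpq hps hqs
  have hC : cross r s p ≠ 0 := genpos_cross_ne hgp hr hs hp hrs hpr.symm hps.symm
  have hE : cross r s q ≠ 0 := genpos_cross_ne hgp hr hs hq hrs hqr.symm hqs.symm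
  have e1 : cross p q z = 0 := by
    rw [← hz1, cross_combo ha, cross_self_left, cross_self_right]; ring
  have e2 : cross p q z = b1 * cross p q r + b2 * cross p q s := by
    rw [← hz2, cross_combo hb]
  have e3 : cross r s z = 0 := by
    rw [← hz2, cross_combo hb, cross_self_left, cross_self_right]; ring
  have e4 : cross r s z = a1 * cross r s p + a2 * cross r s q := by
    rw [← hz1, cross_combo ha]
  have key1 : b1 * cross p q r + b2 * cross p q s = 0 := by rw [← e2, e1]
  have key2 : a1 * cross r s p + a2 * cross r s q = 0 := by rw [← e4, e3]
  have hdiff := cross_diff_identity p q r s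
  have hsr : ∀ x : Pt, cross s r x = - cross r s x := fun x => cross_swap r s x
  rcases hA.lt_or_gt with hAneg | hApos
  · -- cross p q r < 0 : use Cross4 p q s r
    right
    have hBpos : 0 < cross p q s := by
      rcases hB.lt_or_gt with h | h
      · nlinarith
      · exact h
    have hEneg : cross r s q < 0 := by
      rcases hE.lt_or_gt with h | h
      · exact h
      · exfalso
        have hCneg : cross r s p < 0 := by
          rcases hC.lt_or_gt with h' | h'
          · exact h'
          · nlinarith
        nlinarith
    have hCpos : 0 < cross r s p := by
      rcases hC.lt_or_gt with h' | h'
      · nlinarith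
      · exact h'
    refine ⟨hBpos, hAneg, ?_, ?_⟩
    · rw [hsr q]; linarith
    · rw [hsr p]; linarith
  · -- 0 < cross p q r : Cross4 p q r s
    left
    have hBneg : cross p q s < 0 := by
      rcases hB.lt_or_gt with h | h
      · exact h
      · nlinarith
    have hEpos : 0 < cross r s q := by
      rcases hE.lt_or_gt with h | h
      · exfalso
        have hCpos : 0 < cross r s p := by
          rcases hC.lt_or_gt with h' | h'
          · nlinarith
          · exact h'
        nlinarith
      · exact h
    have hCneg : cross r s p < 0 := by
      rcases hC.lt_or_gt with h' | h'
      · exact h'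
      · nlinarith
    exact ⟨hApos, hBneg, hEpos, hCneg⟩

/-- `t` lies strictly inside the triangle `xyz`. -/
def Bary (t x y z : Pt) : Prop :=
  ∃ α β γ : ℝ, 0 < α ∧ 0 < β ∧ 0 < γ ∧ α + β + γ = 1 ∧ α • x + β • y + γ • z = t

lemma bary_cross1 {t x y z : Pt} (h : Bary t x y z) :
    ∃ α : ℝ, 0 < α ∧ α < 1 ∧ cross y z t = α * cross y z x := by
  obtain ⟨α, β, γ, hα, hβ, hγ, hsum, ht⟩ := h
  exact ⟨α, hα, by linarith, by
    rw [← ht, cross_combo3 hsum, cross_self_left, cross_self_right]; ring⟩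

lemma bary_cross2 {t x y z : Pt} (h : Bary t x y z) :
    ∃ β : ℝ, 0 < β ∧ β < 1 ∧ cross x z t = β * cross x z y := by
  obtain ⟨α, β, γ, hα, hβ, hγ, hsum, ht⟩ := h
  exact ⟨β, hβ, by linarith, by
    rw [← ht, cross_combo3 hsum, cross_self_left, cross_self_right]; ring⟩

lemma bary_cross3 {t x y z : Pt} (h : Bary t x y z) :
    ∃ γ : ℝ, 0 < γ ∧ γ < 1 ∧ cross x y t = γ * cross x y z := by
  obtain ⟨α, β, γ, hα, hβ, hγ, hsum, ht⟩ := h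
  exact ⟨γ, hγ, by linarith, by
    rw [← ht, cross_combo3 hsum, cross_self_left, cross_self_right]; ring⟩

lemma bary_ne {t x y z : Pt} (h : Bary t x y z) (hnc : cross x y z ≠ 0) :
    t ≠ x ∧ t ≠ y ∧ t ≠ z := by
  obtain ⟨α, hα, _, h1⟩ := bary_cross1 h
  obtain ⟨γ, hγ, _, h3⟩ := bary_cross3 h
  have hyzx : cross y z x = cross x y z := by simp [cross]; ring
  have h1' : cross y z t ≠ 0 := by
    rw [h1, hyzx]; exact mul_ne_zero (ne_of_gt hα) hnc
  have h3' : cross x y t ≠ 0 := by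
    rw [h3]; exact mul_ne_zero (ne_of_gt hγ) hnc
  refine ⟨?_, ?_, ?_⟩
  · rintro rfl; rw [cross_self_left] at h3'; exact h3' rfl
  · rintro rfl; rw [cross_self_left] at h1'; exact h1' rfl
  · rintro rfl; rw [cross_self_right] at h1'; exact h1' rfl

lemma bary_swap23 {t x y z : Pt} (h : Bary t x y z) : Bary t x z y := by
  obtain ⟨α, β, γ, hα, hβ, hγ, hsum, ht⟩ := h
  exact ⟨α, γ, β, hα, hγ, hβ, by linarith, by rw [← ht]; abel⟩

lemma bary_rot {t x y z : Pt} (h : Bary t x y z) : Bary t y z x := by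
  obtain ⟨α, β, γ, hα, hβ, hγ, hsum, ht⟩ := h
  exact ⟨β, γ, α, hβ, hγ, hα, by linarith, by rw [← ht]; abel⟩

/-- If `t` is inside `xyz` and `x` is inside `eyz` then `t` is inside `eyz`. -/
lemma bary_subst {t x y z e : Pt} (h1 : Bary t x y z) (h2 : Bary x e y z) :
    Bary t e y z := by
  obtain ⟨α, β, γ, hα, hβ, hγ, hsum, ht⟩ := h1
  obtain ⟨α', β', γ', hα', hβ', hγ', hsum', hx⟩ := h2
  refine ⟨α * α', β + α * β', γ + α * γ', by positivity, by positivity, by positivity,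
    by nlinarith, ?_⟩
  rw [← ht, ← hx]
  ext
  · simp only [Prod.fst_add, Prod.smul_fst, smul_eq_mul]; ring
  · simp only [Prod.snd_add, Prod.smul_snd, smul_eq_mul]; ring

/-- Radon-type trichotomy for four points in general position. -/
lemma radon4 {S : Finset Pt} (hgp : GenPos S) {a b c d : Pt}
    (ha : a ∈ S) (hb : b ∈ S) (hc : c ∈ S) (hd : d ∈ S)
    (hab : a ≠ b) (hac : a ≠ c) (had : a ≠ d)
    (hbc : b ≠ c) (hbd : b ≠ d) (hcd : c ≠ d) :
    (∃ p q r s, p ∈ S ∧ q ∈ S ∧ r ∈ S ∧ s ∈ S ∧ Cross4 p q r s)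
    ∨ Bary d a b c ∨ Bary a d b c ∨ Bary b d a c ∨ Bary c d a b := by
  have hΔ : cross a b c ≠ 0 := genpos_cross_ne hgp ha hb hc hab hac hbc
  set Δ := cross a b c with hΔdef
  set α := cross d b c / Δ with hαdef
  set β := cross a d c / Δ with hβdef
  set γ := cross a b d / Δ with hγdef
  have hsum : α + β + γ = 1 := by
    rw [hαdef, hβdef, hγdef]
    field_simp
    simp [hΔdef, cross]; ring
  have hcomb : α • a + β • b + γ • c = d := by
    rw [hαdef, hβdef, hγdef]
    ext
    · simp only [Prod.fst_add, Prod.smul_fst, smul_eq_mul]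
      field_simp
      simp [hΔdef, cross]; ring
    · simp only [Prod.snd_add, Prod.smul_snd, smul_eq_mul]
      field_simp
      simp [hΔdef, cross]; ring
  have hα0 : α ≠ 0 := by
    rw [hαdef]
    exact div_ne_zero (genpos_cross_ne hgp hd hb hc hbd.symm hcd.symm hbc) hΔ
  have hβ0 : β ≠ 0 := by
    rw [hβdef]
    exact div_ne_zero (genpos_cross_ne hgp ha hd hc had hac hcd.symm) hΔ
  have hγ0 : γ ≠ 0 := by
    rw [hγdef]
    exact div_ne_zero (genpos_cross_ne hgp ha hb hd hab had hbd) hΔ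
  clear_value α β γ
  -- helper for the one-negative (crossing) cases
  have cross_case : ∀ (x y w : Pt) (cx cy cw : ℝ), x ∈ S → y ∈ S → w ∈ S →
      x ≠ y → x ≠ w → x ≠ d → y ≠ w → y ≠ d → w ≠ d →
      0 < cx → 0 < cy → cw < 0 → cx + cy + cw = 1 → cx • x + cy • y + cw • w = d →
      (∃ p q r s, p ∈ S ∧ q ∈ S ∧ r ∈ S ∧ s ∈ S ∧ Cross4 p q r s) := by
    intro x y w cx cy cw hx hy hw hxy hxw hxd hyw hyd hwd hcx hcy hcw hcsum hccomb
    have hW : 0 < cx + cy := by linarith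
    set zz : Pt := (cx / (cx + cy)) • x + (cy / (cx + cy)) • y with hzz
    have hz1 : zz ∈ openSegment ℝ x y := by
      refine ⟨cx / (cx + cy), cy / (cx + cy), by positivity, by positivity, ?_, rfl⟩
      field_simp
    have hz2 : zz ∈ openSegment ℝ d w := by
      refine ⟨1 / (cx + cy), -cw / (cx + cy), by positivity, div_pos (by linarith) hW, ?_, ?_⟩
      · field_simp; linarith
      · rw [← hccomb, hzz]
        ext
        · simp only [Prod.fst_add, Prod.smul_fst, smul_eq_mul]
          field_simp
          try ring
        · simp only [Prod.snd_add, Prod.smul_snd, smul_eq_mul]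
          field_simp
          try ring
    rcases cross4_of_openSeg hgp hx hy hd hw hxy hxd hxw hyd hyw hwd.symm hz1 hz2 with h | h
    · exact ⟨x, y, d, w, hx, hy, hd, hw, h⟩
    · exact ⟨x, y, w, d, hx, hy, hw, hd, h⟩
  rcases hα0.lt_or_gt with hα | hα <;> rcases hβ0.lt_or_gt with hβ | hβ <;>
    rcases hγ0.lt_or_gt with hγ | hγ
  · -- all negative: impossible
    exfalso; linarith
  · -- α<0, β<0, γ>0 : c inside (d,a,b)
    right; right; right; right
    refine ⟨1/γ, -α/γ, -β/γ, by positivity, div_pos (by linarith) hγ, div_pos (by linarith) hγ, ?_, ?_⟩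
    · field_simp; linarith
    · have : γ • c = d - α • a - β • b := by
        rw [← hcomb]; try abel
      ext
      · have h1 := congrArg Prod.fst this
        simp only [Prod.fst_add, Prod.fst_sub, Prod.smul_fst, smul_eq_mul] at h1 ⊢
        field_simp
        try nlinarith [h1]
      · have h1 := congrArg Prod.snd this
        simp only [Prod.snd_add, Prod.snd_sub, Prod.smul_snd, smul_eq_mul] at h1 ⊢
        field_simp
        try nlinarith [h1]
  · -- α<0, β>0, γ<0 : b inside (d,a,c)
    right; right; right; left
    refine ⟨1/β, -α/β, -γ/β, by positivity, div_pos (by linarith) hβ, div_pos (by linarith) hβ, ?_, ?_⟩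
    · field_simp; linarith
    · have : β • b = d - α • a - γ • c := by
        rw [← hcomb]; try abel
      ext
      · have h1 := congrArg Prod.fst this
        simp only [Prod.fst_add, Prod.fst_sub, Prod.smul_fst, smul_eq_mul] at h1 ⊢
        field_simp
        try nlinarith [h1]
      · have h1 := congrArg Prod.snd this
        simp only [Prod.snd_add, Prod.snd_sub, Prod.smul_snd, smul_eq_mul] at h1 ⊢
        field_simp
        try nlinarith [h1]
  · -- α<0, β>0, γ>0 : crossing (b,c) × (d,a)
    left
    refine cross_case b c a β γ α hb hc ha hbc hab.symm hbd hac.symm hcd had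
      hβ hγ hα (by linarith) ?_
    rw [← hcomb]; try abel
  · -- α>0, β<0, γ<0 : a inside (d,b,c)
    right; right; left
    refine ⟨1/α, -β/α, -γ/α, by positivity, div_pos (by linarith) hα, div_pos (by linarith) hα, ?_, ?_⟩
    · field_simp; linarith
    · have : α • a = d - β • b - γ • c := by
        rw [← hcomb]; try abel
      ext
      · have h1 := congrArg Prod.fst this
        simp only [Prod.fst_add, Prod.fst_sub, Prod.smul_fst, smul_eq_mul] at h1 ⊢
        field_simp
        try nlinarith [h1]
      · have h1 := congrArg Prod.snd this
        simp only [Prod.snd_add, Prod.snd_sub, Prod.smul_snd, smul_eq_mul] at h1 ⊢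
        field_simp
        try nlinarith [h1]
  · -- α>0, β<0, γ>0 : crossing (a,c) × (d,b)
    left
    refine cross_case a c b α γ β ha hc hb hac hab had hbc.symm hcd hbd
      hα hγ hβ (by linarith) ?_
    rw [← hcomb]; try abel
  · -- α>0, β>0, γ<0 : crossing (a,b) × (d,c)
    left
    refine cross_case a b c α β γ ha hb hc hab hac had hbc hbd hcd
      hα hβ hγ (by linarith) ?_
    rw [← hcomb]; try abel
  · -- all positive : d inside (a,b,c)
    right; left
    exact ⟨α, β, γ, hα, hβ, hγ, hsum, hcomb⟩

end Radon

section TwoInterior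

lemma two_interior_core {S : Finset Pt} (hgp : GenPos S) {u v w d e : Pt}
    (hu : u ∈ S) (hv : v ∈ S) (hw : w ∈ S) (hd : d ∈ S) (he : e ∈ S)
    (huv : u ≠ v) (huw : u ≠ w) (hvw : v ≠ w) (hde : d ≠ e)
    (hBd : Bary d u v w) (hBe : Bary e u v w)
    (hcu : 0 < cross d e u) (hcv : 0 < cross d e v) :
    ∃ p q r s, p ∈ S ∧ q ∈ S ∧ r ∈ S ∧ s ∈ S ∧ Cross4 p q r s := by
  have hnc : cross u v w ≠ 0 := genpos_cross_ne hgp hu hv hw huv huw hvw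
  obtain ⟨hdu, hdv, hdw⟩ := bary_ne hBd hnc
  obtain ⟨heu, hev, hew⟩ := bary_ne hBe hnc
  rcases radon4 hgp hu hv hd he huv hdu.symm heu.symm hdv.symm hev.symm hde with
    hres | hB | hB | hB | hB
  · exact hres
  · -- Bary e u v d
    exfalso
    obtain ⟨α, β, γ, hα, hβ, hγ, hsum, hcombo⟩ := hB
    have h1 : cross d e e = α * cross d e u + β * cross d e v + γ * cross d e d := by
      rw [← hcombo, cross_combo3 hsum]
    rw [cross_self_left, cross_self_right] at h1
    nlinarith
  · -- Bary u e v d : vertex case at u, functional cross v w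
    exfalso
    have hG : cross v w u ≠ 0 := genpos_cross_ne hgp hv hw hu hvw huv.symm huw.symm
    obtain ⟨ad, had0, had1, hpd⟩ := bary_cross1 hBd
    obtain ⟨ae, hae0, hae1, hpe⟩ := bary_cross1 hBe
    obtain ⟨α, β, γ, hα, hβ, hγ, hsum, hcombo⟩ := hB
    have h1 : cross v w u = α * cross v w e + β * cross v w v + γ * cross v w d := by
      rw [← hcombo, cross_combo3 hsum]
    rw [cross_self_left, hpd, hpe] at h1
    have h4 : cross v w u * (1 - α * ae - γ * ad) = 0 := by linear_combination h1
    have h5 : 0 < 1 - α * ae - γ * ad := by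
      nlinarith [mul_lt_mul_of_pos_left hae1 hα, mul_lt_mul_of_pos_left had1 hγ]
    rcases mul_eq_zero.mp h4 with h | h
    · exact hG h
    · linarith
  · -- Bary v e u d : vertex case at v, functional cross u w
    exfalso
    have hG : cross u w v ≠ 0 := genpos_cross_ne hgp hu hw hv huw huv hvw.symm
    obtain ⟨bd, hbd0, hbd1, hpd⟩ := bary_cross2 hBd
    obtain ⟨be, hbe0, hbe1, hpe⟩ := bary_cross2 hBe
    obtain ⟨α, β, γ, hα, hβ, hγ, hsum, hcombo⟩ := hB
    have h1 : cross u w v = α * cross u w e + β * cross u w u + γ * cross u w d := by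
      rw [← hcombo, cross_combo3 hsum]
    rw [cross_self_left, hpd, hpe] at h1
    have h4 : cross u w v * (1 - α * be - γ * bd) = 0 := by linear_combination h1
    have h5 : 0 < 1 - α * be - γ * bd := by
      nlinarith [mul_lt_mul_of_pos_left hbe1 hα, mul_lt_mul_of_pos_left hbd1 hγ]
    rcases mul_eq_zero.mp h4 with h | h
    · exact hG h
    · linarith
  · -- Bary d e u v
    exfalso
    obtain ⟨α, β, γ, hα, hβ, hγ, hsum, hcombo⟩ := hB
    have h1 : cross d e d = α * cross d e e + β * cross d e u + γ * cross d e v := by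
      rw [← hcombo, cross_combo3 hsum]
    rw [cross_self_left, cross_self_right] at h1
    nlinarith

lemma two_interior {S : Finset Pt} (hgp : GenPos S) {x y z d e : Pt}
    (hx : x ∈ S) (hy : y ∈ S) (hz : z ∈ S) (hd : d ∈ S) (he : e ∈ S)
    (hxy : x ≠ y) (hxz : x ≠ z) (hyz : y ≠ z) (hde : d ≠ e)
    (hBd : Bary d x y z) (hBe : Bary e x y z) :
    ∃ p q r s, p ∈ S ∧ q ∈ S ∧ r ∈ S ∧ s ∈ S ∧ Cross4 p q r s := by
  have hnc : cross x y z ≠ 0 := genpos_cross_ne hgp hx hy hz hxy hxz hyz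
  obtain ⟨hdx, hdy, hdz⟩ := bary_ne hBd hnc
  obtain ⟨hex, hey, hez⟩ := bary_ne hBe hnc
  have hFx : cross d e x ≠ 0 := genpos_cross_ne hgp hd he hx hde hdx hex
  have hFy : cross d e y ≠ 0 := genpos_cross_ne hgp hd he hy hde hdy hey
  have hFz : cross d e z ≠ 0 := genpos_cross_ne hgp hd he hz hde hdz hez
  have hswx : cross e d x = - cross d e x := cross_swap d e x
  have hswy : cross e d y = - cross d e y := cross_swap d e y
  have hswz : cross e d z = - cross d e z := cross_swap d e z
  rcases hFx.lt_or_gt with hsx | hsx <;> rcases hFy.lt_or_gt with hsy | hsy <;>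
    rcases hFz.lt_or_gt with hsz | hsz
  · -- (-,-,-) : swap d e, use (x,y,_)
    exact two_interior_core hgp hx hy hz he hd hxy hxz hyz hde.symm hBe hBd
      (by rw [hswx]; linarith) (by rw [hswy]; linarith)
  · -- (-,-,+) : swap d e, use (x,y)
    exact two_interior_core hgp hx hy hz he hd hxy hxz hyz hde.symm hBe hBd
      (by rw [hswx]; linarith) (by rw [hswy]; linarith)
  · -- (-,+,-) : swap d e, (x,z,y)
    exact two_interior_core hgp hx hz hy he hd hxz hxy hyz.symm hde.symm
      (bary_swap23 hBe) (bary_swap23 hBd)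
      (by rw [hswx]; linarith) (by rw [hswz]; linarith)
  · -- (-,+,+) : (y,z,x)
    exact two_interior_core hgp hy hz hx hd he hyz hxy.symm hxz.symm hde
      (bary_rot hBd) (bary_rot hBe) hsy hsz
  · -- (+,-,-) : swap d e, (y,z,x)
    exact two_interior_core hgp hy hz hx he hd hyz hxy.symm hxz.symm hde.symm
      (bary_rot hBe) (bary_rot hBd)
      (by rw [hswy]; linarith) (by rw [hswz]; linarith)
  · -- (+,-,+) : (x,z,y)
    exact two_interior_core hgp hx hz hy hd he hxz hxy hyz.symm hde
      (bary_swap23 hBd) (bary_swap23 hBe) hsx hsz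
  · -- (+,+,-) : (x,y,z)
    exact two_interior_core hgp hx hy hz hd he hxy hxz hyz hde hBd hBe hsx hsy
  · -- (+,+,+)
    exact two_interior_core hgp hx hy hz hd he hxy hxz hyz hde hBd hBe hsx hsy

end TwoInterior

section Path4

/-- The path `X – T – Y – Z` drawn on `S`. -/
def path4 (S : Finset Pt) (T X Y Z : Pt) : SimpleGraph {x // x ∈ S} :=
  SimpleGraph.fromRel fun a b =>
    ((a : Pt) = T ∧ (b : Pt) = X) ∨ ((a : Pt) = T ∧ (b : Pt) = Y) ∨
    ((a : Pt) = Y ∧ (b : Pt) = Z)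

variable {S : Finset Pt} {T X Y Z : Pt}

lemma path4_adj_iff {a b : {x // x ∈ S}} :
    (path4 S T X Y Z).Adj a b ↔ a ≠ b ∧
      ((((a : Pt) = T ∧ (b : Pt) = X) ∨ ((a : Pt) = T ∧ (b : Pt) = Y) ∨
        ((a : Pt) = Y ∧ (b : Pt) = Z)) ∨
       (((b : Pt) = T ∧ (a : Pt) = X) ∨ (((b : Pt) = T ∧ (a : Pt) = Y)) ∨
        ((b : Pt) = Y ∧ (a : Pt) = Z))) := by
  constructor
  · rintro ⟨hne, h⟩; exact ⟨hne, h⟩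
  · rintro ⟨hne, h⟩; exact ⟨hne, h⟩

lemma path4_isTree (hT : T ∈ S) (hX : X ∈ S) (hY : Y ∈ S) (hZ : Z ∈ S)
    (hTX : T ≠ X) (hTY : T ≠ Y) (hTZ : T ≠ Z) (hXY : X ≠ Y) (hXZ : X ≠ Z) (hYZ : Y ≠ Z)
    (hset : ∀ v : {x // x ∈ S}, (v : Pt) = T ∨ (v : Pt) = X ∨ (v : Pt) = Y ∨ (v : Pt) = Z) :
    (path4 S T X Y Z).IsTree := by
  classical
  refine isTree_of_parent (path4 S T X Y Z) ⟨X, hX⟩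
    (fun v => if (v : Pt) = T then ⟨X, hX⟩ else if (v : Pt) = Y then ⟨T, hT⟩
      else if (v : Pt) = Z then ⟨Y, hY⟩ else ⟨X, hX⟩)
    (fun v => if (v : Pt) = X then 0 else if (v : Pt) = T then 1
      else if (v : Pt) = Y then 2 else 3)
    ?_ ?_ ?_ ?_
  · beta_reduce
    rw [if_neg (show ¬ (X = T) from fun h => hTX h.symm),
        if_neg (show ¬ (X = Y) from hXY),
        if_neg (show ¬ (X = Z) from hXZ)]
  · intro v hv
    have hvX : (v : Pt) ≠ X := fun h => hv (Subtype.ext h)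
    beta_reduce
    rcases hset v with hvT | hvT | hvT | hvT
    · rw [if_pos hvT, path4_adj_iff]
      exact ⟨fun h => hvX (congrArg Subtype.val h), Or.inl (Or.inl ⟨hvT, rfl⟩)⟩
    · exact absurd hvT hvX
    · rw [if_neg (show ¬ ((v:Pt) = T) from fun h => hTY (h.symm.trans hvT)), if_pos hvT,
        path4_adj_iff]
      refine ⟨fun h => hTY (show T = Y from (congrArg Subtype.val h).symm.trans hvT), ?_⟩
      · exact Or.inr (Or.inr (Or.inl ⟨rfl, hvT⟩))
    · rw [if_neg (show ¬ ((v:Pt) = T) from fun h => hTZ (h.symm.trans hvT)),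
        if_neg (show ¬ ((v:Pt) = Y) from fun h => hYZ (h.symm.trans hvT)), if_pos hvT,
        path4_adj_iff]
      refine ⟨fun h => hYZ (show Y = Z from (congrArg Subtype.val h).symm.trans hvT), ?_⟩
      · exact Or.inr (Or.inr (Or.inr ⟨rfl, hvT⟩))
  · intro v hv
    have hvX : (v : Pt) ≠ X := fun h => hv (Subtype.ext h)
    beta_reduce
    rcases hset v with hvT | hvT | hvT | hvT
    · rw [if_pos hvT, if_pos rfl, if_neg hvX, if_pos hvT]
      omega
    · exact absurd hvT hvX
    · rw [if_neg (show ¬ ((v:Pt) = T) from fun h => hTY (h.symm.trans hvT)), if_pos hvT,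
        if_neg (show ¬ (T = X) from hTX), if_pos rfl, if_neg hvX,
        if_neg (show ¬ ((v:Pt) = T) from fun h => hTY (h.symm.trans hvT)), if_pos hvT]
      omega
    · rw [if_neg (show ¬ ((v:Pt) = T) from fun h => hTZ (h.symm.trans hvT)),
        if_neg (show ¬ ((v:Pt) = Y) from fun h => hYZ (h.symm.trans hvT)), if_pos hvT,
        if_neg (show ¬ (Y = X) from fun h => hXY h.symm),
        if_neg (show ¬ (Y = T) from fun h => hTY h.symm), if_pos rfl,
        if_neg hvX,
        if_neg (show ¬ ((v:Pt) = T) from fun h => hTZ (h.symm.trans hvT)),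
        if_neg (show ¬ ((v:Pt) = Y) from fun h => hYZ (h.symm.trans hvT))]
      omega
  · intro v w hadj
    rw [path4_adj_iff] at hadj
    obtain ⟨hne, h | h⟩ := hadj
    · rcases h with ⟨hv, hw⟩ | ⟨hv, hw⟩ | ⟨hv, hw⟩
      · -- v = T, w = X : w = f v
        left; beta_reduce
        rw [if_pos hv]; exact Subtype.ext hw
      · -- v = T, w = Y : v = f w
        right; beta_reduce
        rw [if_neg (show ¬ ((w:Pt) = T) from fun h => hTY (h.symm.trans hw)), if_pos hw]
        exact Subtype.ext hv
      · -- v = Y, w = Z : v = f w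
        right; beta_reduce
        rw [if_neg (show ¬ ((w:Pt) = T) from fun h => hTZ (h.symm.trans hw)),
          if_neg (show ¬ ((w:Pt) = Y) from fun h => hYZ (h.symm.trans hw)), if_pos hw]
        exact Subtype.ext hv
    · rcases h with ⟨hw, hv⟩ | ⟨hw, hv⟩ | ⟨hw, hv⟩
      · -- w = T, v = X : v = f w
        right; beta_reduce
        rw [if_pos hw]; exact Subtype.ext hv
      · -- w = T, v = Y : w = f v
        left; beta_reduce
        rw [if_neg (show ¬ ((v:Pt) = T) from fun h => hTY (h.symm.trans hv)), if_pos hv]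
        exact Subtype.ext hw
      · -- w = Y, v = Z : w = f v
        left; beta_reduce
        rw [if_neg (show ¬ ((v:Pt) = T) from fun h => hTZ (h.symm.trans hv)),
          if_neg (show ¬ ((v:Pt) = Y) from fun h => hYZ (h.symm.trans hv)), if_pos hv]
        exact Subtype.ext hw

lemma path4_isPlane (hgp : GenPos S) (hT : T ∈ S) (hX : X ∈ S) (hY : Y ∈ S) (hZ : Z ∈ S)
    (hTX : T ≠ X) (hTY : T ≠ Y) (hTZ : T ≠ Z) (hXY : X ≠ Y) (hXZ : X ≠ Z) (hYZ : Y ≠ Z)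
    (hside : 0 < cross Y Z T * cross Y Z X) :
    IsPlaneGraph (path4 S T X Y Z) := by
  have core : ∀ u v w z : Pt,
      ((u = T ∧ v = X) ∨ (u = T ∧ v = Y) ∨ (u = Y ∧ v = Z)) →
      ((w = T ∧ z = X) ∨ (w = T ∧ z = Y) ∨ (w = Y ∧ z = Z)) →
      s(u, v) ≠ s(w, z) →
      openSegment ℝ u v ∩ openSegment ℝ w z = ∅ := by
    intro u v w z h1 h2 hne
    have hsep : openSegment ℝ T X ∩ openSegment ℝ Y Z = ∅ := by
      rcases mul_pos_iff.mp hside with ⟨h1', h2'⟩ | ⟨h1', h2'⟩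
      · refine openSegment_disjoint_sep (u := Y) (v := Z) (le_of_lt h1') (le_of_lt h2')
          (by linarith) ?_ ?_
        · rw [cross_self_left]
        · rw [cross_self_right]
      · have e1 : cross Z Y T = - cross Y Z T := cross_swap Y Z T
        have e2 : cross Z Y X = - cross Y Z X := cross_swap Y Z X
        refine openSegment_disjoint_sep (u := Z) (v := Y) ?_ ?_ ?_ ?_ ?_
        · rw [e1]; linarith
        · rw [e2]; linarith
        · rw [e1, e2]; linarith
        · rw [cross_self_right]
        · rw [cross_self_left]
    rcases h1 with ⟨h1a, h1b⟩ | ⟨h1a, h1b⟩ | ⟨h1a, h1b⟩ <;>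
      rcases h2 with ⟨h2a, h2b⟩ | ⟨h2a, h2b⟩ | ⟨h2a, h2b⟩ <;>
      rw [h1a, h1b] at hne ⊢ <;> rw [h2a, h2b] at hne <;> rw [h2a, h2b]
    · exact absurd rfl hne
    · -- TX vs TY : share T
      exact openSegment_disjoint_shared (genpos_cross_ne hgp hT hX hY hTX hTY hXY)
    · -- TX vs YZ
      exact hsep
    · -- TY vs TX : share T
      exact openSegment_disjoint_shared (genpos_cross_ne hgp hT hY hX hTY hTX hXY.symm)
    · exact absurd rfl hne
    · -- TY vs YZ : share Y
      rw [openSegment_symm ℝ T Y]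
      exact openSegment_disjoint_shared (genpos_cross_ne hgp hY hT hZ hTY.symm hYZ hTZ)
    · -- YZ vs TX
      rw [Set.inter_comm]; exact hsep
    · -- YZ vs TY : share Y
      rw [openSegment_symm ℝ T Y]
      exact openSegment_disjoint_shared (genpos_cross_ne hgp hY hZ hT hYZ hTY.symm hTZ.symm)
    · exact absurd rfl hne
  intro a b c d hab hcd hne
  rw [path4_adj_iff] at hab hcd
  obtain ⟨hne1, h1⟩ := hab
  obtain ⟨hne2, h2⟩ := hcd
  have hnePt : ∀ (x y w z : {t // t ∈ S}), s(x,y) ≠ s(w,z) →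
      s((x:Pt),(y:Pt)) ≠ s((w:Pt),(z:Pt)) := by
    intro x y w z h hcon
    apply h
    rw [Sym2.eq_iff] at hcon ⊢
    rcases hcon with ⟨e1, e2⟩ | ⟨e1, e2⟩
    · exact Or.inl ⟨Subtype.ext e1, Subtype.ext e2⟩
    · exact Or.inr ⟨Subtype.ext e1, Subtype.ext e2⟩
  rcases h1 with h1 | h1 <;> rcases h2 with h2 | h2
  · exact core _ _ _ _ h1 h2 (hnePt _ _ _ _ hne)
  · rw [openSegment_symm ℝ (c : Pt) (d : Pt)]
    exact core _ _ _ _ h1 h2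
      (by have := hnePt _ _ _ _ hne; rwa [Sym2.eq_swap (a := (c:Pt))] at this)
  · rw [openSegment_symm ℝ (a : Pt) (b : Pt)]
    exact core _ _ _ _ h1 h2
      (by have := hnePt _ _ _ _ hne; rwa [Sym2.eq_swap (a := (a:Pt))] at this)
  · rw [openSegment_symm ℝ (a : Pt) (b : Pt), openSegment_symm ℝ (c : Pt) (d : Pt)]
    exact core _ _ _ _ h1 h2
      (by have := hnePt _ _ _ _ hne
          rwa [Sym2.eq_swap (a := (a:Pt)), Sym2.eq_swap (a := (c:Pt))] at this)

lemma path4_disjoint (hTX : T ≠ X) (hTY : T ≠ Y) (hTZ : T ≠ Z) (hXY : X ≠ Y)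
    (hXZ : X ≠ Z) (hYZ : Y ≠ Z) :
    Disjoint (path4 S T X Y Z).edgeSet (path4 S Z T X Y).edgeSet := by
  rw [Set.disjoint_left]
  intro e he1 he2
  induction e using Sym2.ind with
  | _ a b =>
    rw [SimpleGraph.mem_edgeSet] at he1 he2
    rw [path4_adj_iff] at he1 he2
    obtain ⟨-, h1⟩ := he1
    obtain ⟨-, h2⟩ := he2
    have key : ∀ A B : Pt,
        (((A = T ∧ B = X) ∨ (A = T ∧ B = Y) ∨ (A = Y ∧ B = Z))) →
        (((A = Z ∧ B = T) ∨ (A = Z ∧ B = X) ∨ (A = X ∧ B = Y)) ∨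
         ((B = Z ∧ A = T) ∨ (B = Z ∧ A = X) ∨ (B = X ∧ A = Y))) → False := by
      intro A B hs1 hs2
      rcases hs1 with ⟨e1, e2⟩ | ⟨e1, e2⟩ | ⟨e1, e2⟩ <;>
        rcases hs2 with (⟨e3, e4⟩ | ⟨e3, e4⟩ | ⟨e3, e4⟩) | (⟨e3, e4⟩ | ⟨e3, e4⟩ | ⟨e3, e4⟩) <;>
        subst_vars <;> simp_all
    rcases h1 with h1 | h1
    · exact key _ _ h1 h2
    · rcases h2 with h2 | h2
      · exact key _ _ h1 (Or.inr h2)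
      · exact key _ _ h1 (Or.inl h2)

end Path4

section Main

lemma two_trees_of_bary4 {S : Finset Pt} (hgp : GenPos S) {t x y z : Pt}
    (ht : t ∈ S) (hx : x ∈ S) (hy : y ∈ S) (hz : z ∈ S)
    (hxy : x ≠ y) (hxz : x ≠ z) (hyz : y ≠ z) (hB : Bary t x y z)
    (hset : ∀ v : {p // p ∈ S}, (v : Pt) = t ∨ (v : Pt) = x ∨ (v : Pt) = y ∨ (v : Pt) = z) :
    ∃ T : Fin 2 → SimpleGraph {p // p ∈ S},
      (∀ i, IsPlaneSpanningTree (T i)) ∧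
      (∀ i j, i ≠ j → Disjoint (T i).edgeSet (T j).edgeSet) := by
  have hnc : cross x y z ≠ 0 := genpos_cross_ne hgp hx hy hz hxy hxz hyz
  obtain ⟨htx, hty, htz⟩ := bary_ne hB hnc
  have hyzx : cross y z x = cross x y z := by simp [cross]; ring
  -- side condition for the first path
  obtain ⟨α, hα0, hα1, hα⟩ := bary_cross1 hB
  have hside1 : 0 < cross y z t * cross y z x := by
    rw [hα]
    have h0 : cross y z x ≠ 0 := by rw [hyzx]; exact hnc
    rcases h0.lt_or_gt with h | h
    · nlinarith [mul_pos hα0 (mul_pos_of_neg_of_neg h h)]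
    · nlinarith [mul_pos hα0 (mul_pos h h)]
  -- side condition for the second path
  obtain ⟨γ, hγ0, hγ1, hγ⟩ := bary_cross3 hB
  have hside2 : 0 < cross x y z * cross x y t := by
    rw [hγ]
    rcases (genpos_cross_ne hgp hx hy hz hxy hxz hyz).lt_or_gt with h | h
    · nlinarith [mul_pos hγ0 (mul_pos_of_neg_of_neg h h)]
    · nlinarith [mul_pos hγ0 (mul_pos h h)]
  have hset2 : ∀ v : {p // p ∈ S}, (v : Pt) = z ∨ (v : Pt) = t ∨ (v : Pt) = x ∨ (v : Pt) = y := by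
    intro v
    rcases hset v with h | h | h | h
    · exact Or.inr (Or.inl h)
    · exact Or.inr (Or.inr (Or.inl h))
    · exact Or.inr (Or.inr (Or.inr h))
    · exact Or.inl h
  refine ⟨![path4 S t x y z, path4 S z t x y], ?_, ?_⟩
  · intro i
    fin_cases i
    · exact ⟨path4_isTree ht hx hy hz htx hty htz hxy hxz hyz hset,
        path4_isPlane hgp ht hx hy hz htx hty htz hxy hxz hyz hside1⟩
    · exact ⟨path4_isTree hz ht hx hy htz.symm hxz.symm hyz.symm htx hty hxy hset2,
        path4_isPlane hgp hz ht hx hy htz.symm hxz.symm hyz.symm htx hty hxy hside2⟩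
  · intro i j hij
    fin_cases i <;> fin_cases j
    · exact absurd rfl hij
    · exact path4_disjoint htx hty htz hxy hxz hyz
    · exact (path4_disjoint htx hty htz hxy hxz hyz).symm
    · exact absurd rfl hij

lemma two_trees_of_exCross4 {S : Finset Pt} (hgp : GenPos S)
    (h : ∃ p q r s, p ∈ S ∧ q ∈ S ∧ r ∈ S ∧ s ∈ S ∧ Cross4 p q r s) :
    ∃ T : Fin 2 → SimpleGraph {p // p ∈ S},
      (∀ i, IsPlaneSpanningTree (T i)) ∧
      (∀ i j, i ≠ j → Disjoint (T i).edgeSet (T j).edgeSet) := by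
  obtain ⟨p, q, r, s, hp, hq, hr, hs, h4⟩ := h
  exact two_trees_of_cross4 hgp hp hq hr hs h4

lemma main_bary_case {S : Finset Pt} (hgp : GenPos S) {t x y z : Pt}
    (ht : t ∈ S) (hx : x ∈ S) (hy : y ∈ S) (hz : z ∈ S)
    (hxy : x ≠ y) (hxz : x ≠ z) (hyz : y ≠ z) (hB : Bary t x y z) :
    ∃ T : Fin 2 → SimpleGraph {p // p ∈ S},
      (∀ i, IsPlaneSpanningTree (T i)) ∧
      (∀ i j, i ≠ j → Disjoint (T i).edgeSet (T j).edgeSet) := by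
  have hnc : cross x y z ≠ 0 := genpos_cross_ne hgp hx hy hz hxy hxz hyz
  obtain ⟨htx, hty, htz⟩ := bary_ne hB hnc
  by_cases h5 : ∃ e ∈ S, e ≠ t ∧ e ≠ x ∧ e ≠ y ∧ e ≠ z
  · obtain ⟨e, he, het, hex, hey, hez⟩ := h5
    rcases radon4 hgp hx hy hz he hxy hxz hex.symm hyz hey.symm hez.symm with
      hres | hB2 | hB2 | hB2 | hB2
    · exact two_trees_of_exCross4 hgp hres
    · -- Bary e x y z : two interior points t, e of triangle xyz
      exact two_trees_of_exCross4 hgp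
        (two_interior hgp hx hy hz ht he hxy hxz hyz het.symm hB hB2)
    · -- Bary x e y z
      have hB' : Bary t e y z := bary_subst hB hB2
      exact two_trees_of_exCross4 hgp
        (two_interior hgp he hy hz ht hx hey hez hyz htx hB' hB2)
    · -- Bary y e x z
      have h1 : Bary t y z x := bary_rot hB
      have h2 : Bary y e z x := bary_swap23 hB2
      have hB' : Bary t e z x := bary_subst h1 h2
      exact two_trees_of_exCross4 hgp
        (two_interior hgp he hz hx ht hy hez hex (hxz.symm) hty hB' h2)
    · -- Bary z e x y
      have h1 : Bary t z x y := bary_rot (bary_rot hB)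
      have hB' : Bary t e x y := bary_subst h1 hB2
      exact two_trees_of_exCross4 hgp
        (two_interior hgp he hx hy ht hz hex hey hxy htz hB' hB2)
  · -- S = {t, x, y, z}
    push_neg at h5
    refine two_trees_of_bary4 hgp ht hx hy hz hxy hxz hyz hB ?_
    intro v
    by_contra hcon
    push_neg at hcon
    obtain ⟨h1, h2, h3, h4⟩ := hcon
    have := h5 (v : Pt) v.2 h1 h2 h3
    exact h4 this

lemma exists_four {S : Finset Pt} (h : 4 ≤ S.card) :
    ∃ a b c d : Pt, a ∈ S ∧ b ∈ S ∧ c ∈ S ∧ d ∈ S ∧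
      a ≠ b ∧ a ≠ c ∧ a ≠ d ∧ b ≠ c ∧ b ≠ d ∧ c ≠ d := by
  classical
  obtain ⟨a, ha⟩ := Finset.card_pos.mp (show 0 < S.card by omega)
  have h1 : 3 ≤ (S.erase a).card := by
    have := Finset.card_erase_of_mem ha
    omega
  obtain ⟨b, hb⟩ := Finset.card_pos.mp (by omega : 0 < (S.erase a).card)
  have h2 : 2 ≤ ((S.erase a).erase b).card := by
    have := Finset.card_erase_of_mem hb
    omega
  obtain ⟨c, hc⟩ := Finset.card_pos.mp (by omega : 0 < ((S.erase a).erase b).card)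
  have h3 : 1 ≤ (((S.erase a).erase b).erase c).card := by
    have := Finset.card_erase_of_mem hc
    omega
  obtain ⟨d, hd⟩ := Finset.card_pos.mp (by omega : 0 < (((S.erase a).erase b).erase c).card)
  have hbS : b ∈ S := Finset.mem_of_mem_erase hb
  have hcS : c ∈ S := Finset.mem_of_mem_erase (Finset.mem_of_mem_erase hc)
  have hdS : d ∈ S :=
    Finset.mem_of_mem_erase (Finset.mem_of_mem_erase (Finset.mem_of_mem_erase hd))
  refine ⟨a, b, c, d, ha, hbS, hcS, hdS, ?_, ?_, ?_, ?_, ?_, ?_⟩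
  · exact fun hab => (Finset.ne_of_mem_erase hb) hab.symm
  · exact fun hac => (Finset.ne_of_mem_erase (Finset.mem_of_mem_erase hc)) hac.symm
  · exact fun had =>
      (Finset.ne_of_mem_erase
        (Finset.mem_of_mem_erase (Finset.mem_of_mem_erase hd))) had.symm
  · exact fun hbc => (Finset.ne_of_mem_erase hc) hbc.symm
  · exact fun hbd =>
      (Finset.ne_of_mem_erase (Finset.mem_of_mem_erase hd)) hbd.symm
  · exact fun hcd => (Finset.ne_of_mem_erase hd) hcd.symm

end Main

/-- Every set of n ≥ 4 points in general position admits at least 2 pairwise edge-disjoint plane spanning trees. -/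
theorem two_spanning_trees (S : Finset Pt) (n : ℕ) (hS : S.card = n) (hgp : GenPos S)
    (hn : 4 ≤ n) :
    ∃ T : Fin 2 → SimpleGraph {x // x ∈ S},
      (∀ i, IsPlaneSpanningTree (T i)) ∧
      (∀ i j, i ≠ j → Disjoint (T i).edgeSet (T j).edgeSet) := by
  have hcard : 4 ≤ S.card := by rw [hS]; exact hn
  obtain ⟨a, b, c, d, ha, hb, hc, hd, hab, hac, had, hbc, hbd, hcd⟩ := exists_four hcard
  rcases radon4 hgp ha hb hc hd hab hac had hbc hbd hcd with hres | hB | hB | hB | hB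
  · exact two_trees_of_exCross4 hgp hres
  · exact main_bary_case hgp hd ha hb hc hab hac hbc hB
  · exact main_bary_case hgp ha hd hb hc hbd.symm hcd.symm hbc hB
  · exact main_bary_case hgp hb hd ha hc had.symm hcd.symm hac hB
  · exact main_bary_case hgp hc hd ha hb had.symm hbd.symm hab hB
end
end
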